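/- Let S and T be closed densely defined operators on a Hilbert space H, and let A be a bounded operator on H with norm ‖A‖. Then the gap metric δ̂(T + A, T) ≤ ‖A‖, where δ̂(S,T) = ‖P_S − P_T‖ and P_S, P_T are the orthogonal projections onto the graphs of S and T in H × H. -/

import Mathlib

open scoped RealInnerProductSpace

noncomputable section

variable {H : Type*} [NormedAddCommGroup H] [InnerProductSpace ℝ H] [CompleteSpace H]

/-- The graph of an unbounded operator `T`, viewed as a submodule of the Hilbert space
    `H ×₂ H` (the product equipped with the ℓ² inner product). -/
def hilbertGraph (T : H →ₗ.[ℝ] H) : Submodule ℝ (WithLp 2 (H × H)) :=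
  T.graph.map (WithLp.linearEquiv 2 ℝ (H × H)).symm.toLinearMap

/-- The orthogonal projection of `H ×₂ H` onto a closed subspace, as an operator on
    `H ×₂ H`. -/
def graphProj (K : Submodule ℝ (WithLp 2 (H × H))) (hK : IsClosed (K : Set (WithLp 2 (H × H)))) :
    WithLp 2 (H × H) →L[ℝ] WithLp 2 (H × H) :=
  haveI : CompleteSpace K := hK.completeSpace_coe
  K.subtypeL.comp K.orthogonalProjectionOnto

/-- The sum `T + A` of a (possibly unbounded) operator `T` and a bounded operator `A`,
    defined on the domain of `T`. -/
def pmapAddBounded (T : H →ₗ.[ℝ] H) (A : H →L[ℝ] H) : H →ₗ.[ℝ] H :=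
  ⟨T.domain, T.toFun + (A : H →ₗ[ℝ] H).comp T.domain.subtype⟩

/- auxiliary lemmas -/

lemma aux_mem_hilbertGraph (T : H →ₗ.[ℝ] H) (f : T.domain) :
    (WithLp.equiv 2 (H × H)).symm (↑f, T f) ∈ hilbertGraph T :=
  ⟨(↑f, T f), T.mem_graph f, rfl⟩

lemma aux_hilbertGraph_mem (T : H →ₗ.[ℝ] H) (x : WithLp 2 (H × H)) (hx : x ∈ hilbertGraph T) :
    ∃ f : T.domain, x = (WithLp.equiv 2 (H × H)).symm (↑f, T f) := by
  obtain ⟨y, hy, rfl⟩ := hx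
  rw [SetLike.mem_coe, LinearPMap.mem_graph_iff] at hy
  obtain ⟨f, h1, h2⟩ := hy
  exact ⟨f, by rw [h1, h2]; rfl⟩

/-- The projection onto a closed subspace is distance-minimizing. -/
lemma aux_norm_sub_graphProj_le (K : Submodule ℝ (WithLp 2 (H × H)))
    (hK : IsClosed (K : Set (WithLp 2 (H × H)))) (y m : WithLp 2 (H × H)) (hm : m ∈ K) :
    ‖y - graphProj K hK y‖ ≤ ‖y - m‖ := by
  haveI : CompleteSpace K := hK.completeSpace_coe
  have hP : graphProj K hK y = (K.orthogonalProjectionOnto y : WithLp 2 (H × H)) := rfl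
  rw [hP]
  set p : WithLp 2 (H × H) := (K.orthogonalProjectionOnto y : WithLp 2 (H × H)) with hp
  have h0 : ⟪y - p, p - m⟫ = 0 :=
    Submodule.starProjection_inner_eq_zero (K := K) y _ (K.sub_mem (K.orthogonalProjectionOnto y).2 hm)
  have hdecomp : y - m = (y - p) + (p - m) := by abel
  have hsq := norm_add_sq_real (y - p) (p - m)
  rw [h0, ← hdecomp] at hsq
  refine le_of_pow_le_pow_left₀ two_ne_zero (norm_nonneg _) ?_
  nlinarith [sq_nonneg ‖p - m‖]

/-- If every element of `M` is within `c·‖z‖` of `N`, then the projection onto `M`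
    contracts vectors orthogonal to `N` by a factor `c`. -/
lemma aux_norm_graphProj_le (M N : Submodule ℝ (WithLp 2 (H × H)))
    (hM : IsClosed (M : Set (WithLp 2 (H × H)))) (hN : IsClosed (N : Set (WithLp 2 (H × H))))
    (c : ℝ) (hc : 0 ≤ c)
    (h : ∀ z ∈ M, ‖z - graphProj N hN z‖ ≤ c * ‖z‖)
    (u : WithLp 2 (H × H)) (hu : u ∈ Nᗮ) :
    ‖graphProj M hM u‖ ≤ c * ‖u‖ := by
  haveI : CompleteSpace M := hM.completeSpace_coe
  haveI : CompleteSpace N := hN.completeSpace_coe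
  have hP : graphProj M hM u = (M.orthogonalProjectionOnto u : WithLp 2 (H × H)) := rfl
  rw [hP]
  set p : WithLp 2 (H × H) := (M.orthogonalProjectionOnto u : WithLp 2 (H × H)) with hp
  have hpM : p ∈ M := (M.orthogonalProjectionOnto u).2
  have h1 : ⟪u - p, p⟫ = 0 := Submodule.starProjection_inner_eq_zero (K := M) u p hpM
  have h2 : ‖p‖ ^ 2 = ⟪u, p⟫ := by
    have : ⟪u, p⟫ = ⟪u - p, p⟫ + ⟪p, p⟫ := by
      rw [← inner_add_left, sub_add_cancel]
    rw [this, h1, real_inner_self_eq_norm_sq]; ring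
  have h3 : ⟪u, graphProj N hN p⟫ = 0 := by
    have hmem : graphProj N hN p ∈ N := (N.orthogonalProjectionOnto p).2
    have := (Submodule.mem_orthogonal N u).mp hu _ hmem
    rwa [real_inner_comm] at this
  have h4 : ‖p‖ ^ 2 = ⟪u, p - graphProj N hN p⟫ := by
    rw [inner_sub_right, h3, sub_zero, h2]
  have h5 : ‖p‖ ^ 2 ≤ ‖u‖ * (c * ‖p‖) := by
    calc ‖p‖ ^ 2 = ⟪u, p - graphProj N hN p⟫ := h4
      _ ≤ ‖u‖ * ‖p - graphProj N hN p‖ := real_inner_le_norm _ _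
      _ ≤ ‖u‖ * (c * ‖p‖) := by
          exact mul_le_mul_of_nonneg_left (h p hpM) (norm_nonneg u)
  rcases eq_or_lt_of_le (norm_nonneg p) with h0 | h0
  · rw [← h0]; positivity
  · nlinarith

/-- first-component bound in the ℓ² product. -/
lemma aux_fst_le (x : WithLp 2 (H × H)) : ‖x.fst‖ ≤ ‖x‖ := by
  have := WithLp.prod_norm_sq_eq_of_L2 x
  nlinarith [norm_nonneg x, norm_nonneg x.fst, sq_nonneg ‖x.snd‖]

/-- Each graph is within `‖A‖` of the other (directed gap bound). -/
lemma aux_graph_near₁ (T : H →ₗ.[ℝ] H) (A : H →L[ℝ] H)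
    (hTclosed : IsClosed ((hilbertGraph T : Submodule ℝ (WithLp 2 (H × H))) :
      Set (WithLp 2 (H × H)))) :
    ∀ z ∈ hilbertGraph (pmapAddBounded T A),
      ‖z - graphProj (hilbertGraph T) hTclosed z‖ ≤ ‖A‖ * ‖z‖ := by
  intro z hz
  obtain ⟨f, rfl⟩ := aux_hilbertGraph_mem _ z hz
  set g : T.domain := ⟨f.1, f.2⟩ with hg
  have hval : pmapAddBounded T A f = T g + A (f : H) := rfl
  set m : WithLp 2 (H × H) := (WithLp.equiv 2 (H × H)).symm (↑g, T g) with hm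
  have hmem : m ∈ hilbertGraph T := aux_mem_hilbertGraph T g
  have hd : (WithLp.equiv 2 (H × H)).symm (↑f, pmapAddBounded T A f) - m
      = (WithLp.equiv 2 (H × H)).symm (0, A (f : H)) := by
    rw [hm, WithLp.equiv_symm_apply, ← WithLp.toLp_sub, Prod.mk_sub_mk, hval]
    norm_num
    exact sub_self _
  calc ‖_ - graphProj (hilbertGraph T) hTclosed _‖
      ≤ ‖(WithLp.equiv 2 (H × H)).symm (↑f, pmapAddBounded T A f) - m‖ :=
        aux_norm_sub_graphProj_le _ _ _ _ hmem
    _ = ‖A (f : H)‖ := by rw [hd]; exact WithLp.norm_toLp_snd 2 H H _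
    _ ≤ ‖A‖ * ‖(f : H)‖ := A.le_opNorm _
    _ ≤ ‖A‖ * ‖(WithLp.equiv 2 (H × H)).symm (↑f, pmapAddBounded T A f)‖ := by
        refine mul_le_mul_of_nonneg_left ?_ (norm_nonneg A)
        simpa using aux_fst_le ((WithLp.equiv 2 (H × H)).symm (↑f, pmapAddBounded T A f))

lemma aux_graph_near₂ (T : H →ₗ.[ℝ] H) (A : H →L[ℝ] H)
    (hTAclosed : IsClosed ((hilbertGraph (pmapAddBounded T A) :
      Submodule ℝ (WithLp 2 (H × H))) : Set (WithLp 2 (H × H)))) :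
    ∀ z ∈ hilbertGraph T,
      ‖z - graphProj (hilbertGraph (pmapAddBounded T A)) hTAclosed z‖ ≤ ‖A‖ * ‖z‖ := by
  intro z hz
  obtain ⟨f, rfl⟩ := aux_hilbertGraph_mem _ z hz
  set g : (pmapAddBounded T A).domain := ⟨f.1, f.2⟩ with hg
  have hval : pmapAddBounded T A g = T f + A (f : H) := rfl
  set m : WithLp 2 (H × H) := (WithLp.equiv 2 (H × H)).symm (↑g, pmapAddBounded T A g) with hm
  have hmem : m ∈ hilbertGraph (pmapAddBounded T A) := aux_mem_hilbertGraph _ g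
  have hd : (WithLp.equiv 2 (H × H)).symm (↑f, T f) - m
      = (WithLp.equiv 2 (H × H)).symm (0, -(A (f : H))) := by
    rw [hm, WithLp.equiv_symm_apply, ← WithLp.toLp_sub, Prod.mk_sub_mk, hval]
    norm_num
    exact sub_self _
  calc ‖_ - graphProj (hilbertGraph (pmapAddBounded T A)) hTAclosed _‖
      ≤ ‖(WithLp.equiv 2 (H × H)).symm (↑f, T f) - m‖ :=
        aux_norm_sub_graphProj_le _ _ _ _ hmem
    _ = ‖A (f : H)‖ := by
        rw [hd]
        rw [WithLp.equiv_symm_apply, WithLp.norm_toLp_snd 2 H H _, norm_neg]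
    _ ≤ ‖A‖ * ‖(f : H)‖ := A.le_opNorm _
    _ ≤ ‖A‖ * ‖(WithLp.equiv 2 (H × H)).symm (↑f, T f)‖ := by
        refine mul_le_mul_of_nonneg_left ?_ (norm_nonneg A)
        simpa using aux_fst_le ((WithLp.equiv 2 (H × H)).symm (↑f, T f))

/-- Let S, T be closed densely defined operators on a Hilbert space H and A a bounded
    operator on H.  Then the gap metric satisfies δ̂(T + A, T) ≤ ‖A‖, where δ̂ is the norm
    of the difference of the orthogonal projections onto the graphs in H ×₂ H. -/
theorem stmt_18 (S T : H →ₗ.[ℝ] H) (A : H →L[ℝ] H)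
    (hSdense : Dense (S.domain : Set H)) (hTdense : Dense (T.domain : Set H))
    (hSclosed : IsClosed ((hilbertGraph S : Submodule ℝ (WithLp 2 (H × H))) :
      Set (WithLp 2 (H × H))))
    (hTclosed : IsClosed ((hilbertGraph T : Submodule ℝ (WithLp 2 (H × H))) :
      Set (WithLp 2 (H × H))))
    (hTAclosed : IsClosed ((hilbertGraph (pmapAddBounded T A) :
      Submodule ℝ (WithLp 2 (H × H))) : Set (WithLp 2 (H × H)))) :
    ‖graphProj (hilbertGraph (pmapAddBounded T A)) hTAclosed
        - graphProj (hilbertGraph T) hTclosed‖ ≤ ‖A‖ := by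
  set M := hilbertGraph (pmapAddBounded T A)
  set N := hilbertGraph T
  haveI : CompleteSpace M := hTAclosed.completeSpace_coe
  haveI : CompleteSpace N := hTclosed.completeSpace_coe
  set P := graphProj M hTAclosed with hPdef
  set Q := graphProj N hTclosed with hQdef
  refine ContinuousLinearMap.opNorm_le_bound _ (norm_nonneg A) fun x => ?_
  rw [ContinuousLinearMap.sub_apply]
  set a : WithLp 2 (H × H) := P (x - Q x) with ha
  set b : WithLp 2 (H × H) := Q x - P (Q x) with hb
  have hQcoe : ∀ y, Q y = (N.orthogonalProjectionOnto y : WithLp 2 (H × H)) := fun _ => rfl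
  have hPcoe : ∀ y, P y = (M.orthogonalProjectionOnto y : WithLp 2 (H × H)) := fun _ => rfl
  have hdecomp : P x - Q x = a - b := by
    rw [ha, hb, map_sub]; abel
  -- orthogonality of a and b
  have haM : a ∈ M := by rw [ha, hPcoe]; exact (M.orthogonalProjectionOnto _).2
  have hbMperp : b ∈ Mᗮ := by
    rw [hb, hPcoe]; exact Submodule.sub_starProjection_mem_orthogonal (K := M) _
  have hab : ⟪a, b⟫ = 0 := (Submodule.mem_orthogonal M b).mp hbMperp a haM
  have hpyth : ‖a - b‖ ^ 2 = ‖a‖ ^ 2 + ‖b‖ ^ 2 := by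
    rw [norm_sub_sq_real, hab]; ring
  -- bound on b
  have hQxN : Q x ∈ N := by rw [hQcoe]; exact (N.orthogonalProjectionOnto _).2
  have hbbound : ‖b‖ ≤ ‖A‖ * ‖Q x‖ := aux_graph_near₂ T A hTAclosed (Q x) hQxN
  -- bound on a
  have huNperp : x - Q x ∈ Nᗮ := by
    rw [hQcoe]; exact Submodule.sub_starProjection_mem_orthogonal (K := N) _
  have habound : ‖a‖ ≤ ‖A‖ * ‖x - Q x‖ :=
    aux_norm_graphProj_le M N hTAclosed hTclosed ‖A‖ (norm_nonneg A)
      (aux_graph_near₁ T A hTclosed) _ huNperp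
  -- Pythagoras for x
  have hxinner : ⟪x - Q x, Q x⟫ = 0 := by
    rw [hQcoe]; exact Submodule.starProjection_inner_eq_zero (K := N) x _ (N.orthogonalProjectionOnto x).2
  have hxsq : ‖x - Q x‖ ^ 2 + ‖Q x‖ ^ 2 = ‖x‖ ^ 2 := by
    have h := norm_add_sq_real (x - Q x) (Q x)
    rw [hxinner, sub_add_cancel] at h
    linarith
  rw [hdecomp]
  refine le_of_pow_le_pow_left₀ two_ne_zero (by positivity) ?_
  rw [mul_pow, hpyth]
  nlinarith [norm_nonneg a, norm_nonneg b, norm_nonneg (x - Q x), norm_nonneg (Q x),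
    sq_nonneg ‖A‖, mul_le_mul habound habound (norm_nonneg a) (by positivity),
    mul_le_mul hbbound hbbound (norm_nonneg b) (by positivity)]


end
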